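/- For 0 < q < 1, complex a, and nonnegative integer n, ∑_{k=0}^∞ q^{k(k+1)/2} A_q(a q^{k-2n})/(q;q)_k = (-q;q)_∞ · (a q^{1-2n}; q²)_∞, where A_q(z) = ∑_{m=0}^∞ q^{m²}(-z)^m/(q;q)_m. -/

import Mathlib

open Filter Finset Topology

noncomputable def qpC (q a : ℂ) (n : ℕ) : ℂ := ∏ k ∈ Finset.range n, (1 - a * q ^ k)

noncomputable def qpiC (q a : ℂ) : ℂ := ∏' k : ℕ, (1 - a * q ^ k)

/-- real partial q-Pochhammer -/
noncomputable def cR (q : ℝ) (k : ℕ) : ℝ := ∏ j ∈ Finset.range k, (1 - q * q ^ j)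

lemma qpC_real (q : ℝ) (k : ℕ) : qpC (q : ℂ) (q : ℂ) k = ((cR q k : ℝ) : ℂ) := by
  rw [qpC, cR]; push_cast; rfl

variable {q : ℝ}

lemma factor_pos (hq0 : 0 < q) (hq1 : q < 1) (j : ℕ) : 0 < 1 - q * q ^ j := by
  have h1 : q * q ^ j ≤ q * 1 := by
    have := pow_le_one₀ hq0.le hq1.le (n := j)
    nlinarith
  nlinarith

lemma cR_pos (hq0 : 0 < q) (hq1 : q < 1) (k : ℕ) : 0 < cR q k :=
  Finset.prod_pos fun j _ => factor_pos hq0 hq1 j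

lemma cR_le_one (hq0 : 0 < q) (hq1 : q < 1) (k : ℕ) : cR q k ≤ 1 :=
  Finset.prod_le_one (fun j _ => (factor_pos hq0 hq1 j).le)
    (fun j _ => by nlinarith [pow_pos hq0 j])

lemma cR_anti (hq0 : 0 < q) (hq1 : q < 1) {k l : ℕ} (h : k ≤ l) : cR q l ≤ cR q k := by
  obtain ⟨t, rfl⟩ := Nat.exists_eq_add_of_le h
  rw [cR, cR, Finset.prod_range_add]
  have h1 : ∏ j ∈ Finset.range t, (1 - q * q ^ (k + j)) ≤ 1 :=
    Finset.prod_le_one (fun j _ => (factor_pos hq0 hq1 _).le)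
      (fun j _ => by nlinarith [pow_pos hq0 (k + j)])
  exact mul_le_of_le_one_right (Finset.prod_nonneg fun j _ => (factor_pos hq0 hq1 j).le) h1

/-- Weierstrass type inequality -/
lemma prod_one_sub_ge (v : ℕ → ℝ) (h0 : ∀ i, 0 ≤ v i) (h1 : ∀ i, v i ≤ 1) (n : ℕ) :
    1 - ∑ i ∈ Finset.range n, v i ≤ ∏ i ∈ Finset.range n, (1 - v i) := by
  induction n with
  | zero => simp
  | succ n ih =>
    rw [Finset.prod_range_succ, Finset.sum_range_succ]
    have hP : (0:ℝ) ≤ ∏ i ∈ Finset.range n, (1 - v i) :=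
      Finset.prod_nonneg fun i _ => by linarith [h1 i]
    have hS : (0:ℝ) ≤ ∑ i ∈ Finset.range n, v i :=
      Finset.sum_nonneg fun i _ => h0 i
    nlinarith [h0 n, h1 n, ih]

/-- uniform positive lower bound for the partial products `cR q k` -/
lemma exists_cR_lb (hq0 : 0 < q) (hq1 : q < 1) : ∃ c : ℝ, 0 < c ∧ ∀ k, c ≤ cR q k := by
  obtain ⟨m, hm⟩ := exists_pow_lt_of_lt_one (x := (1 - q)/2) (by linarith) hq1
  refine ⟨cR q m / 2, div_pos (cR_pos hq0 hq1 m) two_pos, fun k => ?_⟩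
  rcases le_total k m with hk | hk
  · have := cR_anti hq0 hq1 hk
    have := cR_pos hq0 hq1 m
    linarith
  · obtain ⟨t, rfl⟩ := Nat.exists_eq_add_of_le hk
    have hsplit : cR q (m + t) = cR q m * ∏ j ∈ Finset.range t, (1 - q * q ^ (m + j)) := by
      rw [cR, cR, Finset.prod_range_add]
    rw [hsplit]
    have key : (1:ℝ)/2 ≤ ∏ j ∈ Finset.range t, (1 - q * q ^ (m + j)) := by
      refine le_trans ?_ (prod_one_sub_ge (fun j => q * q ^ (m + j))
        (fun j => by positivity)
        (fun j => by
          show q * q ^ (m + j) ≤ 1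
          nlinarith [pow_pos hq0 (m + j), factor_pos hq0 hq1 (m+j)]) t)
      have hsum : ∑ j ∈ Finset.range t, q * q ^ (m + j)
          = q * q ^ m * ∑ j ∈ Finset.range t, q ^ j := by
        rw [Finset.mul_sum]
        congr 1; ext j; rw [pow_add]; ring
      have hgeom : ∑ j ∈ Finset.range t, q ^ j ≤ 1 / (1 - q) := by
        have hpt := pow_pos hq0 t
        calc ∑ j ∈ Finset.range t, q ^ j = (q ^ t - 1)/(q - 1) := geom_sum_eq hq1.ne t
        _ = (1 - q ^ t)/(1 - q) := by
            rw [show (1 - q ^ t : ℝ) = -(q ^ t - 1) by ring, show (1 - q : ℝ) = -(q - 1) by ring,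
              neg_div_neg_eq]
        _ ≤ 1/(1 - q) := by gcongr <;> linarith
      have h2 : q * q ^ m * ∑ j ∈ Finset.range t, q ^ j ≤ q * q ^ m / (1 - q) := by
        rw [div_eq_mul_one_div]
        refine mul_le_mul_of_nonneg_left hgeom (by positivity)
      have h3 : q * q ^ m / (1 - q) ≤ 1/2 := by
        rw [div_le_iff₀ (by linarith)]
        nlinarith [hq0, pow_pos hq0 m]
      rw [hsum]; linarith
    have := cR_pos hq0 hq1 m
    calc cR q m / 2 = cR q m * (1/2) := by ring
    _ ≤ cR q m * ∏ j ∈ Finset.range t, (1 - q * q ^ (m + j)) := by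
        exact mul_le_mul_of_nonneg_left key this.le
    _ = _ := rfl
set_option maxHeartbeats 1000000 in
/-- the q-Pochhammer infinite product converges -/
lemma multipliable_qp (hq0 : 0 < q) (hq1 : q < 1) (a : ℂ) :
    Multipliable (fun k : ℕ => 1 - a * (q : ℂ) ^ k) := by
  -- find k₀ with tail factors close to 1
  have htend : Tendsto (fun k : ℕ => ‖a * (q:ℂ)^k‖) atTop (𝓝 0) := by
    have : Tendsto (fun k : ℕ => (q:ℝ)^k) atTop (𝓝 0) :=
      tendsto_pow_atTop_nhds_zero_of_lt_one hq0.le hq1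
    have := this.const_mul ‖a‖
    rw [mul_zero] at this
    refine this.congr fun k => ?_
    rw [norm_mul, norm_pow, Complex.norm_real, Real.norm_of_nonneg hq0.le]
  obtain ⟨k₀, hk₀⟩ := Filter.eventually_atTop.mp
    (htend.eventually (eventually_le_nhds (by norm_num : (0:ℝ) < 1/2)))
  -- tail is multipliable via complex logs
  have hne : ∀ n : ℕ, (1 : ℂ) - a * (q:ℂ)^(n + k₀) ≠ 0 := by
    intro n
    have hb := hk₀ (n + k₀) (Nat.le_add_left _ _)
    intro h
    have : ‖a * (q:ℂ)^(n+k₀)‖ = 1 := by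
      have : a * (q:ℂ)^(n+k₀) = 1 := by linear_combination -h
      rw [this, norm_one]
    linarith
  have hsl : Summable fun n : ℕ => Complex.log (1 - a * (q:ℂ)^(n + k₀)) := by
    refine Summable.of_norm_bounded (g := fun n => 3/2 * (‖a * (q:ℂ)^k₀‖ * q ^ n)) ?_ ?_
    · exact ((summable_geometric_of_lt_one hq0.le hq1).mul_left _).mul_left _
    · intro n
      have hb := hk₀ (n + k₀) (Nat.le_add_left _ _)
      have heq : (1:ℂ) - a * (q:ℂ)^(n+k₀) = 1 + (-(a * (q:ℂ)^(n+k₀))) := by ring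
      rw [heq]
      refine le_trans (Complex.norm_log_one_add_half_le_self (by rwa [norm_neg])) ?_
      rw [norm_neg]
      have : ‖a * (q:ℂ)^(n+k₀)‖ = ‖a * (q:ℂ)^k₀‖ * q^n := by
        rw [norm_mul, norm_mul, norm_pow, norm_pow, Complex.norm_real,
          Real.norm_of_nonneg hq0.le, pow_add]
        ring
      rw [this]
  have htail : Multipliable fun n : ℕ => 1 - a * (q:ℂ)^(n + k₀) := by
    have := Complex.multipliable_of_summable_log hsl
    exact this
  exact ⟨_, htail.hasProd.prod_range_mul⟩

lemma summable_q_quad (hq0 : 0 < q) (hq1 : q < 1) (r : ℝ) (hr : 0 < r) :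
    Summable (fun k : ℕ => q ^ (k * (k - 1) / 2) * r ^ k) := by
  refine summable_of_ratio_test_tendsto_lt_one (l := 0) one_pos ?_ ?_
  · filter_upwards with k
    positivity
  · have key : ∀ k : ℕ, ‖q ^ ((k+1) * (k+1-1) / 2) * r ^ (k+1)‖ / ‖q ^ (k * (k-1) / 2) * r ^ k‖
        = q ^ k * r := by
      intro k
      have h0 : (k+1) * (k+1-1) = k * (k-1) + 2 * k := by
        cases k with
        | zero => rfl
        | succ n => simp only [Nat.add_sub_cancel, Nat.succ_sub_one]; ring
      have h1 : (k+1) * (k+1-1) / 2 = k * (k-1) / 2 + k := by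
        rw [h0, Nat.add_mul_div_left _ _ (by norm_num : 0 < 2)]
      rw [Real.norm_of_nonneg (by positivity), Real.norm_of_nonneg (by positivity), h1,
        pow_add, pow_succ]
      rw [div_eq_iff (by positivity)]
      ring
    have : Tendsto (fun k : ℕ => q ^ k * r) atTop (𝓝 0) := by
      have := (tendsto_pow_atTop_nhds_zero_of_lt_one hq0.le hq1).mul_const r
      rwa [zero_mul] at this
    refine this.congr fun k => (key k).symm
/-- Euler series term -/
noncomputable def ET (q : ℝ) (x : ℂ) (k : ℕ) : ℂ :=
  (q : ℂ) ^ (k * (k - 1) / 2) * x ^ k / qpC (q : ℂ) (q : ℂ) k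

lemma ET_zero (x : ℂ) : ET q x 0 = 1 := by
  simp [ET, qpC]

lemma norm_ET_le (hq0 : 0 < q) (hq1 : q < 1) {c : ℝ} (hc : 0 < c)
    (hcle : ∀ k, c ≤ cR q k) (x : ℂ) (k : ℕ) :
    ‖ET q x k‖ ≤ q ^ (k * (k - 1) / 2) * ‖x‖ ^ k / c := by
  rw [ET, qpC_real, norm_div, norm_mul, norm_pow, norm_pow, Complex.norm_real,
    Complex.norm_real, Real.norm_of_nonneg hq0.le,
    Real.norm_of_nonneg (cR_pos hq0 hq1 k).le]
  have h1 : 0 ≤ q ^ (k * (k-1)/2) * ‖x‖ ^ k := by positivity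
  exact div_le_div_of_nonneg_left h1 hc (hcle k)

lemma summable_ET (hq0 : 0 < q) (hq1 : q < 1) (x : ℂ) : Summable (ET q x) := by
  obtain ⟨c, hc, hcle⟩ := exists_cR_lb hq0 hq1
  refine Summable.of_norm_bounded (g := fun k => q ^ (k * (k - 1) / 2) * (‖x‖ + 1) ^ k / c) ?_ ?_
  · exact (summable_q_quad hq0 hq1 (‖x‖ + 1) (by positivity)).div_const c
  · intro k
    refine (norm_ET_le hq0 hq1 hc hcle x k).trans ?_
    have hp : ‖x‖ ^ k ≤ (‖x‖ + 1) ^ k :=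
      pow_le_pow_left₀ (norm_nonneg x) (by linarith) k
    have h2 : q ^ (k * (k-1)/2) * ‖x‖ ^ k ≤ q ^ (k * (k-1)/2) * (‖x‖ + 1) ^ k :=
      mul_le_mul_of_nonneg_left hp (by positivity)
    exact (div_le_div_iff_of_pos_right hc).mpr h2

/-- the functional equation: `S x = (1 + x) S (q x)` -/
lemma ET_funeq (hq0 : 0 < q) (hq1 : q < 1) (x : ℂ) :
    HasSum (ET q x) ((1 + x) * ∑' k, ET q ((q : ℂ) * x) k) := by
  set S := ∑' k, ET q ((q : ℂ) * x) k with hS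
  have h1 : HasSum (ET q ((q:ℂ) * x)) S := (summable_ET hq0 hq1 _).hasSum
  have h2 : HasSum (fun k => x * ET q ((q:ℂ) * x) k) (x * S) := h1.mul_left x
  -- shift h2 by one
  set F : ℕ → ℂ := fun n => Nat.rec 0 (fun k _ => x * ET q ((q:ℂ) * x) k) n with hF
  have hF0 : F 0 = 0 := rfl
  have hFs : ∀ k, F (k + 1) = x * ET q ((q:ℂ) * x) k := fun k => rfl
  have h3 : HasSum F (x * S) := by
    have := (hasSum_nat_add_iff (f := F) 1).mp (by simpa [hFs] using h2)
    simpa [hF0] using this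
  have h4 : HasSum (fun k => ET q ((q:ℂ) * x) k + F k) (S + x * S) := h1.add h3
  have key : ∀ k, ET q x k = ET q ((q:ℂ) * x) k + F k := by
    intro k
    cases k with
    | zero => simp [ET_zero, hF0]
    | succ k =>
      rw [hFs]
      have hexp : (k+1) * k / 2 = k * (k-1) / 2 + k := by
        have h0 : (k+1) * k = k * (k-1) + 2 * k := by
          cases k with
          | zero => rfl
          | succ n => simp only [Nat.succ_sub_one]; ring
        rw [h0, Nat.add_mul_div_left _ _ (by norm_num : 0 < 2)]
      have hq_ne : qpC (q:ℂ) (q:ℂ) (k+1) ≠ 0 := by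
        rw [qpC_real]
        exact_mod_cast (cR_pos hq0 hq1 (k+1)).ne'
      have hqk_ne : qpC (q:ℂ) (q:ℂ) k ≠ 0 := by
        rw [qpC_real]
        exact_mod_cast (cR_pos hq0 hq1 k).ne'
      have hrec : qpC (q:ℂ) (q:ℂ) (k+1) = qpC (q:ℂ) (q:ℂ) k * (1 - (q:ℂ) * (q:ℂ)^k) := by
        rw [qpC, qpC, Finset.prod_range_succ]
      have hne2 : (1 : ℂ) - (q:ℂ) * (q:ℂ)^k ≠ 0 := by
        have h := factor_pos hq0 hq1 k
        intro hcontra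
        have h2 : ((1 - q * q ^ k : ℝ) : ℂ) = 0 := by push_cast; linear_combination hcontra
        rw [Complex.ofReal_eq_zero] at h2
        linarith
      rw [ET, ET, ET]
      simp only [Nat.add_sub_cancel]
      rw [hexp, hrec]
      field_simp [hqk_ne, hne2]
      ring
  have h5 : HasSum (ET q x) (S + x * S) := by
    rwa [show (fun k => ET q ((q:ℂ) * x) k + F k) = ET q x from
      funext fun k => (key k).symm] at h4
  have : (1 + x) * S = S + x * S := by ring
  rw [this]
  exact h5
set_option maxHeartbeats 1000000
lemma ET_iter (hq0 : 0 < q) (hq1 : q < 1) (x : ℂ) (n : ℕ) :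
    ∑' k, ET q x k
      = (∏ j ∈ Finset.range n, (1 + x * (q:ℂ)^j)) * ∑' k, ET q ((q:ℂ)^n * x) k := by
  induction n with
  | zero => simp
  | succ n ih =>
    rw [ih, Finset.prod_range_succ]
    have h := (ET_funeq hq0 hq1 ((q:ℂ)^n * x)).tsum_eq
    have harg : (q:ℂ) * ((q:ℂ)^n * x) = (q:ℂ)^(n+1) * x := by ring
    rw [harg] at h
    rw [h]
    ring

lemma ET_tail_tendsto (hq0 : 0 < q) (hq1 : q < 1) (x : ℂ) :
    Tendsto (fun n => ∑' k, ET q ((q:ℂ)^n * x) k) atTop (𝓝 1) := by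
  obtain ⟨c, hc, hcle⟩ := exists_cR_lb hq0 hq1
  set M : ℝ := ∑' k : ℕ, q ^ ((k+1) * k / 2) * ‖x‖ ^ k / c with hM
  have hGsum : Summable (fun k : ℕ => q ^ ((k+1) * k / 2) * ‖x‖ ^ k / c) := by
    refine Summable.of_nonneg_of_le (fun k => by positivity) (fun k => ?_)
      ((summable_q_quad hq0 hq1 (‖x‖ + 1) (by positivity)).div_const c)
    have h1 : q ^ ((k+1) * k / 2) ≤ q ^ (k * (k-1) / 2) :=
      pow_le_pow_of_le_one hq0.le hq1.le (by
        apply Nat.div_le_div_right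
        cases k with
        | zero => simp
        | succ m => exact Nat.mul_le_mul (by omega) (by omega))
    have h2 : ‖x‖ ^ k ≤ (‖x‖ + 1) ^ k := pow_le_pow_left₀ (norm_nonneg x) (by linarith) k
    have := mul_le_mul h1 h2 (by positivity) (by positivity)
    exact (div_le_div_iff_of_pos_right hc).mpr this
  have hM0 : 0 ≤ M := tsum_nonneg fun k => by positivity
  have key : ∀ n : ℕ, ‖(∑' k, ET q ((q:ℂ)^n * x) k) - 1‖ ≤ q ^ n * ‖x‖ * M := by
    intro n
    set y : ℂ := (q:ℂ)^n * x with hy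
    have hyn : ‖y‖ = q ^ n * ‖x‖ := by
      rw [hy, norm_mul, norm_pow, Complex.norm_real, Real.norm_of_nonneg hq0.le]
    have hsum := summable_ET hq0 hq1 y
    have hsplit : ∑' k, ET q y k = ET q y 0 + ∑' k, ET q y (k + 1) :=
      Summable.tsum_eq_zero_add hsum
    rw [hsplit, ET_zero, add_sub_cancel_left]
    have hsum1 : Summable fun k => ET q y (k + 1) := (summable_nat_add_iff 1).mpr hsum
    refine (norm_tsum_le_tsum_norm (summable_norm_iff.mpr hsum1)).trans ?_
    have hbound : ∀ k : ℕ, ‖ET q y (k + 1)‖ ≤ q ^ n * ‖x‖ * (q ^ ((k+1) * k / 2) * ‖x‖ ^ k / c) := by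
      intro k
      refine (norm_ET_le hq0 hq1 hc hcle y (k+1)).trans ?_
      simp only [Nat.add_sub_cancel]
      rw [pow_succ']
      have h1 : ‖y‖ ≤ q ^ n * ‖x‖ := le_of_eq hyn
      have h2 : ‖y‖ ^ k ≤ ‖x‖ ^ k := by
        refine pow_le_pow_left₀ (norm_nonneg y) ?_ k
        rw [hyn]
        have hqn : q ^ n ≤ 1 := pow_le_one₀ hq0.le hq1.le
        nlinarith [norm_nonneg x]
      calc q ^ ((k+1) * k / 2) * (‖y‖ * ‖y‖ ^ k) / c
          ≤ q ^ ((k+1) * k / 2) * ((q ^ n * ‖x‖) * ‖x‖ ^ k) / c := by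
            refine (div_le_div_iff_of_pos_right hc).mpr ?_
            refine mul_le_mul_of_nonneg_left ?_ (by positivity)
            exact mul_le_mul h1 h2 (by positivity) (by positivity)
        _ = q ^ n * ‖x‖ * (q ^ ((k+1) * k / 2) * ‖x‖ ^ k / c) := by ring
    refine (Summable.tsum_le_tsum hbound (summable_norm_iff.mpr hsum1) (hGsum.mul_left _)).trans ?_
    rw [tsum_mul_left]
  have h0 : Tendsto (fun n : ℕ => q ^ n * ‖x‖ * M) atTop (𝓝 0) := by
    have := ((tendsto_pow_atTop_nhds_zero_of_lt_one hq0.le hq1).mul_const ‖x‖).mul_const M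
    simpa using this
  rw [tendsto_iff_norm_sub_tendsto_zero]
  exact squeeze_zero (fun n => norm_nonneg _) key h0

lemma euler_hasSum (hq0 : 0 < q) (hq1 : q < 1) (x : ℂ) :
    HasSum (ET q x) (qpiC (q:ℂ) (-x)) := by
  have hmult := multipliable_qp hq0 hq1 (-x)
  have hprod : Tendsto (fun n => ∏ j ∈ Finset.range n, (1 + x * (q:ℂ)^j)) atTop
      (𝓝 (qpiC (q:ℂ) (-x))) := by
    have := hmult.hasProd.tendsto_prod_nat
    rw [qpiC]
    refine this.congr fun n => ?_
    refine Finset.prod_congr rfl fun j _ => ?_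
    ring
  have hmain : Tendsto
      (fun n => (∏ j ∈ Finset.range n, (1 + x * (q:ℂ)^j)) * ∑' k, ET q ((q:ℂ)^n * x) k)
      atTop (𝓝 (qpiC (q:ℂ) (-x) * 1)) := hprod.mul (ET_tail_tendsto hq0 hq1 x)
  have hconst : (fun n => (∏ j ∈ Finset.range n, (1 + x * (q:ℂ)^j)) * ∑' k, ET q ((q:ℂ)^n * x) k)
      = fun _ => ∑' k, ET q x k := funext fun n => (ET_iter hq0 hq1 x n).symm
  rw [hconst] at hmain
  have := tendsto_nhds_unique hmain tendsto_const_nhds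
  rw [mul_one] at this
  rw [this]
  exact (summable_ET hq0 hq1 x).hasSum

lemma euler_tsum (hq0 : 0 < q) (hq1 : q < 1) (x : ℂ) :
    ∑' k, ET q x k = qpiC (q:ℂ) (-x) :=
  (euler_hasSum hq0 hq1 x).tsum_eq
noncomputable def Aq (q : ℝ) (z : ℂ) : ℂ :=
  ∑' k : ℕ, (q : ℂ) ^ (k ^ 2) * (-z) ^ k / qpC (q : ℂ) (q : ℂ) k

/-- monotonicity of integer powers of q -/
lemma qzpow_le (hq0 : 0 < q) (hq1 : q < 1) {e f : ℤ} (h : e ≤ f) : (q:ℝ) ^ f ≤ q ^ e := by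
  have hq0' : (q:ℝ) ≠ 0 := hq0.ne'
  have hsplit : (q:ℝ) ^ f = q ^ e * q ^ (f - e) := by
    rw [← zpow_add₀ hq0']; ring_nf
  rw [hsplit]
  have hd : (0:ℤ) ≤ f - e := by omega
  obtain ⟨d, hd⟩ := Int.eq_ofNat_of_zero_le hd
  have h1 : (q:ℝ) ^ (f - e) ≤ 1 := by
    rw [hd, zpow_natCast]
    exact pow_le_one₀ hq0.le hq1.le
  have h2 : (0:ℝ) < q ^ e := zpow_pos hq0 e
  nlinarith [zpow_pos hq0 (f - e)]

lemma norm_Q_zpow (hq0 : 0 < q) (z : ℤ) : ‖(q:ℂ) ^ z‖ = (q:ℝ) ^ z := by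
  rw [norm_zpow, Complex.norm_real, Real.norm_of_nonneg hq0.le]

/-- `(-q;q)_m` as a real product -/
noncomputable def dR (q : ℝ) (m : ℕ) : ℝ := ∏ j ∈ Finset.range m, (1 + q * q ^ j)

lemma qpC_neg_real (q : ℝ) (m : ℕ) : qpC (q:ℂ) (-(q:ℂ)) m = ((dR q m : ℝ) : ℂ) := by
  rw [qpC, dR]
  push_cast
  refine Finset.prod_congr rfl fun j _ => by ring

lemma dR_pos (hq0 : 0 < q) (m : ℕ) : 0 < dR q m :=
  Finset.prod_pos fun j _ => by positivity

lemma qpC_neg_ne (hq0 : 0 < q) (m : ℕ) : qpC (q:ℂ) (-(q:ℂ)) m ≠ 0 := by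
  rw [qpC_neg_real]
  exact_mod_cast (dR_pos hq0 m).ne'

/-- `(q;q)_m (-q;q)_m = (q²;q²)_m` -/
lemma qpC_mul_neg (m : ℕ) :
    qpC (q:ℂ) (q:ℂ) m * qpC (q:ℂ) (-(q:ℂ)) m = qpC ((q:ℂ)^2) ((q:ℂ)^2) m := by
  rw [qpC, qpC, qpC, ← Finset.prod_mul_distrib]
  refine Finset.prod_congr rfl fun j _ => ?_
  have : ((q:ℂ)^2) ^ j = ((q:ℂ)^j)^2 := by rw [← pow_mul, ← pow_mul, mul_comm]
  rw [this]
  ring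

/-- splitting off the first `m` factors of `(-q;q)_∞` -/
lemma qpiC_shift (hq0 : 0 < q) (hq1 : q < 1) (m : ℕ) :
    qpC (q:ℂ) (-(q:ℂ)) m * qpiC (q:ℂ) (-((q:ℂ)^(m+1))) = qpiC (q:ℂ) (-(q:ℂ)) := by
  have htail : Multipliable (fun i : ℕ => 1 - (-(q:ℂ)) * (q:ℂ) ^ (i + m)) := by
    refine (multipliable_qp hq0 hq1 (-((q:ℂ)^(m+1)))).congr fun i => ?_
    rw [pow_add, pow_succ]
    ring
  have h := Multipliable.prod_mul_tprod_nat_mul' (f := fun j : ℕ => 1 - (-(q:ℂ)) * (q:ℂ) ^ j)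
    (k := m) htail
  rw [qpC, qpiC, qpiC]
  rw [← h]
  congr 1
  refine tprod_congr fun i => ?_
  rw [pow_add, pow_succ]
  ring
lemma nat_tri (k : ℕ) : k * (k+1) / 2 = k * (k-1) / 2 + k := by
  have h0 : k * (k+1) = k * (k-1) + 2 * k := by
    cases k with
    | zero => rfl
    | succ t => simp only [Nat.succ_sub_one]; ring
  rw [h0, Nat.add_mul_div_left _ _ (by norm_num : 0 < 2)]

lemma nat_sq (m : ℕ) : m ^ 2 = m * (m-1) + m := by
  cases m with
  | zero => rfl
  | succ t => simp only [Nat.succ_sub_one]; ring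

lemma pow2_half (m : ℕ) : ((q:ℂ)^2) ^ (m * (m-1) / 2) = (q:ℂ) ^ (m * (m-1)) := by
  rw [← pow_mul]
  congr 1
  have he : Even (m * (m-1)) := by
    cases m with
    | zero => simp
    | succ t =>
      simp only [Nat.succ_sub_one]
      rw [Nat.mul_comm]
      exact Nat.even_mul_succ_self t
  obtain ⟨r, hr⟩ := he
  omega

/-- the summand of the double series -/
noncomputable def fKM (q : ℝ) (a : ℂ) (n : ℕ) (k m : ℕ) : ℂ :=
  (q:ℂ) ^ (k * (k + 1) / 2) *
    ((q:ℂ) ^ (m ^ 2) * (-(a * (q:ℂ) ^ ((k : ℤ) - 2 * (n:ℤ)))) ^ m / qpC (q:ℂ) (q:ℂ) m) /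
      qpC (q:ℂ) (q:ℂ) k

lemma neg_pow_expand (hq0 : 0 < q) (a : ℂ) (z : ℤ) (m : ℕ) :
    (-(a * (q:ℂ) ^ z)) ^ m = (-a) ^ m * (q:ℂ) ^ (z * m) := by
  have h1 : -(a * (q:ℂ) ^ z) = (-a) * (q:ℂ) ^ z := by ring
  rw [h1, mul_pow]
  congr 1
  rw [← zpow_natCast ((q:ℂ) ^ z) m, ← zpow_mul]

lemma fKM_eq (hq0 : 0 < q) (a : ℂ) (n k m : ℕ) :
    fKM q a n k m
      = ((q:ℂ) ^ (m ^ 2) * (-a) ^ m * (q:ℂ) ^ ((-2) * (n:ℤ) * m) / qpC (q:ℂ) (q:ℂ) m)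
          * ET q ((q:ℂ)^(m+1)) k := by
  have hQne : (q:ℂ) ≠ 0 := by exact_mod_cast hq0.ne'
  have h1 := neg_pow_expand hq0 a ((k : ℤ) - 2 * (n:ℤ)) m
  have h2 : (q:ℂ) ^ (((k : ℤ) - 2 * (n:ℤ)) * m) = (q:ℂ) ^ (k * m) * (q:ℂ) ^ ((-2) * (n:ℤ) * m) := by
    rw [← zpow_natCast (q:ℂ) (k * m), ← zpow_add₀ hQne]
    congr 1
    push_cast
    ring
  have h3 : (q:ℂ) ^ (k * (k+1) / 2) * (q:ℂ) ^ (k * m)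
      = (q:ℂ) ^ (k * (k-1) / 2) * ((q:ℂ)^(m+1)) ^ k := by
    rw [← pow_mul, ← pow_add, ← pow_add]
    congr 1
    rw [nat_tri]
    ring
  rw [fKM, ET, h1, h2]
  linear_combination ((q:ℂ)^(m^2) * (-a)^m * (q:ℂ)^((-2)*(n:ℤ)*m) /
    (qpC (q:ℂ) (q:ℂ) m * qpC (q:ℂ) (q:ℂ) k)) * h3
lemma fKM_inner (hq0 : 0 < q) (hq1 : q < 1) (a : ℂ) (n m : ℕ) :
    ∑' k, fKM q a n k m
      = ((q:ℂ) ^ (m ^ 2) * (-a) ^ m * (q:ℂ) ^ ((-2) * (n:ℤ) * m) / qpC (q:ℂ) (q:ℂ) m)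
          * qpiC (q:ℂ) (-((q:ℂ)^(m+1))) := by
  rw [tsum_congr (fun k => fKM_eq hq0 a n k m), tsum_mul_left, euler_tsum hq0 hq1]

/-- identification of the residual `m`-summand with an Euler term in base `q²` -/
lemma resid_eq_ET (hq0 : 0 < q) (hq1 : q < 1) (a : ℂ) (n m : ℕ) :
    (q:ℂ) ^ (m ^ 2) * (-a) ^ m * (q:ℂ) ^ ((-2) * (n:ℤ) * m)
        / qpC ((q:ℂ)^2) ((q:ℂ)^2) m
      = ET (q^2) (-(a * (q:ℂ) ^ (1 - 2 * (n:ℤ)))) m := by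
  have hQne : (q:ℂ) ≠ 0 := by exact_mod_cast hq0.ne'
  have hcast2 : ((q^2 : ℝ) : ℂ) = (q:ℂ)^2 := by push_cast; ring
  rw [ET, hcast2, pow2_half]
  rw [neg_pow_expand hq0 a (1 - 2 * (n:ℤ)) m]
  -- it remains to match the powers of q
  have hpow : (q:ℂ) ^ (m ^ 2) * (q:ℂ) ^ ((-2) * (n:ℤ) * m)
      = (q:ℂ) ^ (m * (m-1)) * (q:ℂ) ^ ((1 - 2 * (n:ℤ)) * m) := by
    rw [← zpow_natCast (q:ℂ) (m ^ 2), ← zpow_natCast (q:ℂ) (m * (m-1)),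
      ← zpow_add₀ hQne, ← zpow_add₀ hQne]
    congr 1
    have h1 : ((m ^ 2 : ℕ) : ℤ) = ((m * (m-1) : ℕ) : ℤ) + m := by
      rw [nat_sq m]; push_cast; ring
    rw [h1]; ring
  calc (q:ℂ) ^ (m ^ 2) * (-a) ^ m * (q:ℂ) ^ ((-2) * (n:ℤ) * m) / qpC ((q:ℂ)^2) ((q:ℂ)^2) m
      = ((q:ℂ) ^ (m ^ 2) * (q:ℂ) ^ ((-2) * (n:ℤ) * m)) * (-a) ^ m
          / qpC ((q:ℂ)^2) ((q:ℂ)^2) m := by ring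
    _ = _ := by rw [hpow]; ring

lemma fKM_summable (hq0 : 0 < q) (hq1 : q < 1) (a : ℂ) (n : ℕ) :
    Summable (Function.uncurry (fKM q a n)) := by
  obtain ⟨c, hc, hcle⟩ := exists_cR_lb hq0 hq1
  have hq20 : 0 < q^2 := by positivity
  have hq21 : q^2 < 1 := by nlinarith
  set s : ℝ := (q:ℝ) ^ ((1:ℤ) - 2 * (n:ℤ)) * (‖a‖ + 1) with hs_def
  have hs : 0 < s := by
    have := zpow_pos hq0 ((1:ℤ) - 2 * (n:ℤ))
    have := norm_nonneg a
    positivity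
  have hG : Summable (fun k : ℕ => q ^ (k * (k-1) / 2) * (1:ℝ) ^ k / c) :=
    (summable_q_quad hq0 hq1 1 one_pos).div_const c
  have hH : Summable (fun m : ℕ => (q^2) ^ (m * (m-1) / 2) * s ^ m / c) :=
    (summable_q_quad hq20 hq21 s hs).div_const c
  refine Summable.of_norm_bounded
    (g := fun p : ℕ × ℕ => (q ^ (p.1 * (p.1-1) / 2) * (1:ℝ) ^ p.1 / c)
      * ((q^2) ^ (p.2 * (p.2-1) / 2) * s ^ p.2 / c))
    (hG.mul_of_nonneg hH (fun k => by positivity) (fun m => by positivity)) ?_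
  rintro ⟨k, m⟩
  simp only [Function.uncurry]
  -- compute the norm
  have hck : ‖qpC (q:ℂ) (q:ℂ) k‖ = cR q k := by
    rw [qpC_real, Complex.norm_real, Real.norm_of_nonneg (cR_pos hq0 hq1 k).le]
  have hcm : ‖qpC (q:ℂ) (q:ℂ) m‖ = cR q m := by
    rw [qpC_real, Complex.norm_real, Real.norm_of_nonneg (cR_pos hq0 hq1 m).le]
  have hQn : ‖(q:ℂ)‖ = q := by rw [Complex.norm_real, Real.norm_of_nonneg hq0.le]
  have hnorm : ‖fKM q a n k m‖
      = q ^ (k * (k+1) / 2) * (q ^ (m ^ 2) * (‖a‖ * (q:ℝ) ^ ((k:ℤ) - 2 * (n:ℤ))) ^ m / cR q m)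
          / cR q k := by
    rw [fKM, norm_div, norm_mul, norm_div, norm_mul, hck, hcm, norm_pow, norm_pow, norm_pow,
      norm_neg, norm_mul, norm_Q_zpow hq0, hQn]
  rw [hnorm]
  -- canonical zpow forms
  have hEL : q ^ (k * (k+1) / 2) * q ^ (m ^ 2) * ((q:ℝ) ^ ((k:ℤ) - 2 * (n:ℤ))) ^ m
      = (q:ℝ) ^ ((k * (k+1) / 2 : ℕ) + (m ^ 2 : ℕ) + ((k:ℤ) - 2 * (n:ℤ)) * m) := by
    rw [← zpow_natCast (q:ℝ) (k * (k+1) / 2), ← zpow_natCast (q:ℝ) (m ^ 2),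
      ← zpow_natCast ((q:ℝ) ^ ((k:ℤ) - 2 * (n:ℤ))) m, ← zpow_mul,
      ← zpow_add₀ hq0.ne', ← zpow_add₀ hq0.ne']
  have hER : q ^ (k * (k-1) / 2) * ((q^2) ^ (m * (m-1) / 2) * s ^ m)
      = (q:ℝ) ^ ((k * (k-1) / 2 : ℕ) + (m * (m-1) : ℕ) + (1 - 2 * (n:ℤ)) * m)
          * (‖a‖ + 1) ^ m := by
    have hp2 : ((q:ℝ)^2) ^ (m * (m-1) / 2) = q ^ (m * (m-1)) := by
      have := pow2_half (q := q) m
      have h2 : ((q:ℝ) ^ (m * (m-1)) : ℝ) = q ^ (m * (m-1)) := rfl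
      -- redo the proof over ℝ
      rw [← pow_mul]
      congr 1
      have he : Even (m * (m-1)) := by
        cases m with
        | zero => simp
        | succ t =>
          simp only [Nat.succ_sub_one]
          rw [Nat.mul_comm]
          exact Nat.even_mul_succ_self t
      obtain ⟨r, hr⟩ := he
      omega
    rw [hs_def, mul_pow, hp2, zpow_add₀ hq0.ne', zpow_add₀ hq0.ne', zpow_natCast,
      zpow_natCast, zpow_mul, zpow_natCast]
    ring
  have hEE : ((k * (k-1) / 2 : ℕ) : ℤ) + ((m * (m-1) : ℕ) : ℤ) + (1 - 2 * (n:ℤ)) * m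
      ≤ ((k * (k+1) / 2 : ℕ) : ℤ) + ((m ^ 2 : ℕ) : ℤ) + ((k:ℤ) - 2 * (n:ℤ)) * m := by
    have h1 : ((k * (k+1) / 2 : ℕ) : ℤ) = ((k * (k-1) / 2 : ℕ) : ℤ) + k := by
      rw [nat_tri k]; push_cast; ring
    have h2 : ((m ^ 2 : ℕ) : ℤ) = ((m * (m-1) : ℕ) : ℤ) + m := by
      rw [nat_sq m]; push_cast; ring
    rw [h1, h2]
    have hk : (0:ℤ) ≤ (k:ℤ) := Int.ofNat_nonneg k
    have hkm : (0:ℤ) ≤ (k:ℤ) * m := by positivity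
    nlinarith
  calc q ^ (k * (k+1) / 2) * (q ^ (m ^ 2) * (‖a‖ * (q:ℝ) ^ ((k:ℤ) - 2 * (n:ℤ))) ^ m / cR q m)
          / cR q k
      = (q ^ (k * (k+1) / 2) * q ^ (m ^ 2) * ((q:ℝ) ^ ((k:ℤ) - 2 * (n:ℤ))) ^ m) * ‖a‖ ^ m
          / (cR q m * cR q k) := by rw [mul_pow]; ring
    _ = (q:ℝ) ^ ((k * (k+1) / 2 : ℕ) + (m ^ 2 : ℕ) + ((k:ℤ) - 2 * (n:ℤ)) * m) * ‖a‖ ^ m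
          / (cR q m * cR q k) := by rw [hEL]
    _ ≤ (q:ℝ) ^ ((k * (k-1) / 2 : ℕ) + (m * (m-1) : ℕ) + (1 - 2 * (n:ℤ)) * m) * (‖a‖ + 1) ^ m
          / (c * c) := by
        refine div_le_div₀ (by positivity) ?_ (by positivity) ?_
        · refine mul_le_mul (qzpow_le hq0 hq1 hEE) ?_ (by positivity) (zpow_pos hq0 _).le
          exact pow_le_pow_left₀ (norm_nonneg a) (by linarith) m
        · exact mul_le_mul (hcle m) (hcle k) hc.le (cR_pos hq0 hq1 m).le
    _ = q ^ (k * (k-1) / 2) * (1:ℝ) ^ k / c * ((q^2) ^ (m * (m-1) / 2) * s ^ m / c) := by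
        rw [← hER]
        ring
theorem Aq_sum_eval (q : ℝ) (hq0 : 0 < q) (hq1 : q < 1) (a : ℂ) (n : ℕ) :
    ∑' k : ℕ, (q : ℂ) ^ (k * (k + 1) / 2) * Aq q (a * (q : ℂ) ^ ((k : ℤ) - 2 * n)) /
        qpC (q : ℂ) (q : ℂ) k =
      qpiC (q : ℂ) (-(q : ℂ)) * qpiC ((q : ℂ) ^ 2) (a * (q : ℂ) ^ (1 - 2 * (n : ℤ))) := by
  have hq20 : 0 < q^2 := by positivity
  have hq21 : q^2 < 1 := by nlinarith
  have hcast2 : ((q^2 : ℝ) : ℂ) = (q:ℂ)^2 := by push_cast; ring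
  set y : ℂ := -(a * (q:ℂ) ^ (1 - 2 * (n:ℤ))) with hy
  have step1 : ∀ k : ℕ,
      (q : ℂ) ^ (k * (k + 1) / 2) * Aq q (a * (q : ℂ) ^ ((k : ℤ) - 2 * n)) /
        qpC (q : ℂ) (q : ℂ) k = ∑' m, fKM q a n k m := by
    intro k
    rw [Aq]
    rw [show (q:ℂ) ^ (k * (k + 1) / 2) *
          (∑' m : ℕ, (q:ℂ) ^ (m ^ 2) * (-(a * (q:ℂ) ^ ((k:ℤ) - 2 * (n:ℤ)))) ^ m /
            qpC (q:ℂ) (q:ℂ) m) / qpC (q:ℂ) (q:ℂ) k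
        = ((q:ℂ) ^ (k * (k + 1) / 2) / qpC (q:ℂ) (q:ℂ) k) *
          ∑' m : ℕ, (q:ℂ) ^ (m ^ 2) * (-(a * (q:ℂ) ^ ((k:ℤ) - 2 * (n:ℤ)))) ^ m /
            qpC (q:ℂ) (q:ℂ) m from by ring,
      ← tsum_mul_left]
    exact tsum_congr fun m => by rw [fKM]; ring
  have step5 : ∀ m : ℕ, ∑' k, fKM q a n k m
      = qpiC (q:ℂ) (-(q:ℂ)) * ET (q^2) y m := by
    intro m
    rw [fKM_inner hq0 hq1 a n m]
    have hdm := qpC_neg_ne hq0 m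
    have h1 : qpiC (q:ℂ) (-((q:ℂ)^(m+1)))
        = qpiC (q:ℂ) (-(q:ℂ)) / qpC (q:ℂ) (-(q:ℂ)) m := by
      rw [eq_div_iff hdm, mul_comm]
      exact qpiC_shift hq0 hq1 m
    rw [h1, hy, ← resid_eq_ET hq0 hq1 a n m, ← qpC_mul_neg]
    ring
  calc ∑' k : ℕ, (q : ℂ) ^ (k * (k + 1) / 2) * Aq q (a * (q : ℂ) ^ ((k : ℤ) - 2 * n)) /
        qpC (q : ℂ) (q : ℂ) k
      = ∑' k : ℕ, ∑' m : ℕ, fKM q a n k m := tsum_congr step1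
    _ = ∑' m : ℕ, ∑' k : ℕ, fKM q a n k m := (Summable.tsum_comm (fKM_summable hq0 hq1 a n)).symm
    _ = ∑' m : ℕ, qpiC (q:ℂ) (-(q:ℂ)) * ET (q^2) y m := tsum_congr step5
    _ = qpiC (q:ℂ) (-(q:ℂ)) * ∑' m : ℕ, ET (q^2) y m := tsum_mul_left
    _ = qpiC (q:ℂ) (-(q:ℂ)) * qpiC ((q^2 : ℝ):ℂ) (-y) := by rw [euler_tsum hq20 hq21]
    _ = _ := by rw [hcast2, hy, neg_neg]
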